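/- Let p be a prime and M a module over S = ℤ[t]/(t^p − 1). The following are equivalent: (1) multiplication by p is invertible on M; (2) ker(1 − t^M) = im N(t^M), im(1 − t^M) = ker N(t^M), and M = ker N(t^M) ⊕ ker(1 − t^M); (3) (1 − t^M) restricts to an invertible map on ker N(t^M) and N(t^M) restricts to an invertible map on ker(1 − t^M). -/

import Mathlib

/-- The norm endomorphism `N(t) = 1 + t + ⋯ + t^{p-1}` of a module over `ℤ[t]/(t^p - 1)`,
encoded as an abelian group `M` with an endomorphism `t` satisfying `t^p = 1`. -/
def normEnd (p : ℕ) {M : Type*} [AddCommGroup M] (t : AddMonoid.End M) : AddMonoid.End M :=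
  ∑ j ∈ Finset.range p, t ^ j

namespace Stmt6Aux

variable {M : Type*} [AddCommGroup M] {p : ℕ} {t : AddMonoid.End M}

lemma mem_ker_end (f : AddMonoid.End M) (x : M) : x ∈ AddMonoidHom.ker f ↔ f x = 0 := Iff.rfl

lemma mem_range_end (f : AddMonoid.End M) (y : M) :
    y ∈ AddMonoidHom.range f ↔ ∃ x, f x = y := AddMonoidHom.mem_range (f := f)

lemma sum_apply (s : Finset ℕ) (f : ℕ → AddMonoid.End M) (x : M) :
    (∑ i ∈ s, f i) x = ∑ i ∈ s, (f i) x :=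
  AddMonoidHom.finset_sum_apply _ _ _

lemma norm_mul_sub (ht : t ^ p = 1) : normEnd p t * (1 - t) = 0 := by
  have h := geom_sum_mul t p
  rw [ht, sub_self] at h
  have : normEnd p t * (1 - t) = -(normEnd p t * (t - 1)) := by
    rw [mul_sub, mul_sub, mul_one, neg_sub]
  rw [this, normEnd, h, neg_zero]

lemma sub_mul_norm (ht : t ^ p = 1) : (1 - t) * normEnd p t = 0 := by
  have h := mul_geom_sum t p
  rw [ht, sub_self] at h
  have : (1 - t) * normEnd p t = -((t - 1) * normEnd p t) := by
    rw [sub_mul, sub_mul, one_mul, neg_sub]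
  rw [this, normEnd, h, neg_zero]

lemma t_mul_norm (ht : t ^ p = 1) : t * normEnd p t = normEnd p t := by
  have h := sub_mul_norm ht
  rw [sub_mul, one_mul, sub_eq_zero] at h
  exact h.symm

lemma pow_mul_norm (ht : t ^ p = 1) (j : ℕ) : t ^ j * normEnd p t = normEnd p t := by
  induction j with
  | zero => rw [pow_zero, one_mul]
  | succ k ih => rw [pow_succ, mul_assoc, t_mul_norm ht, ih]

lemma norm_mul_norm (ht : t ^ p = 1) : normEnd p t * normEnd p t = p • normEnd p t := by
  calc normEnd p t * normEnd p t
      = (∑ j ∈ Finset.range p, t ^ j) * normEnd p t := by rw [normEnd]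
    _ = ∑ j ∈ Finset.range p, t ^ j * normEnd p t := Finset.sum_mul ..
    _ = ∑ _j ∈ Finset.range p, normEnd p t :=
        Finset.sum_congr rfl fun j _ => pow_mul_norm ht j
    _ = p • normEnd p t := by rw [Finset.sum_const, Finset.card_range]

lemma fixed_pow {x : M} (hx : t x = x) (j : ℕ) : (t ^ j) x = x := by
  induction j with
  | zero => rfl
  | succ k ih =>
    have : (t ^ (k + 1)) x = (t ^ k) (t x) := by rw [pow_succ]; rfl
    rw [this, hx, ih]

lemma norm_apply_fixed {x : M} (hx : (1 - t) x = 0) : normEnd p t x = p • x := by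
  have hx' : t x = x := (sub_eq_zero.mp (show x - t x = 0 from hx)).symm
  rw [normEnd, sum_apply]
  calc ∑ j ∈ Finset.range p, (t ^ j) x
      = ∑ _j ∈ Finset.range p, x := Finset.sum_congr rfl fun j _ => fixed_pow hx' j
    _ = p • x := by rw [Finset.sum_const, Finset.card_range]

lemma exists_g (hp : p.Prime) (ht : t ^ p = 1) :
    ∃ g : AddMonoid.End M, (1 - t) ^ p = p • g ∧ Commute g t := by
  have hc : Commute (1 : AddMonoid.End M) (-t) := Commute.one_left _
  have h := hc.add_pow_prime_eq hp
  set r : AddMonoid.End M :=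
    -t * ∑ k ∈ Finset.Ioo 0 p, (1 : AddMonoid.End M) ^ (k - 1) * (-t) ^ (p - k - 1) *
      ((p.choose k / p : ℕ) : AddMonoid.End M) with hr
  have hrt : Commute r t := by
    refine (Commute.neg_left (Commute.refl t)).mul_left
      (Commute.sum_left _ _ _ fun k _ => ?_)
    exact (((Commute.one_left t).pow_left (k - 1)).mul_left
      (((Commute.neg_left (Commute.refl t))).pow_left (p - k - 1))).mul_left
      (Nat.cast_commute _ t)
  have h1t : (1 : AddMonoid.End M) - t = 1 + -t := sub_eq_add_neg 1 t
  rcases hp.eq_two_or_odd' with h2 | hodd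
  · subst h2
    refine ⟨1 + r, ?_, (Commute.one_left t).add_left hrt⟩
    have hneg : (-t) ^ 2 = (1 : AddMonoid.End M) := by rw [neg_sq, ht]
    rw [h1t, h, one_pow, hneg, nsmul_eq_mul]
    have h2c : ((2 : ℕ) : AddMonoid.End M) = 1 + 1 := by
      rw [Nat.cast_ofNat]; exact one_add_one_eq_two.symm
    rw [h2c, mul_add, mul_one]
    rw [hr, mul_assoc]
  · refine ⟨r, ?_, hrt⟩
    have hneg : (-t) ^ p = -(1 : AddMonoid.End M) := by rw [hodd.neg_pow, ht]
    rw [h1t, h, one_pow, hneg, hr]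
    rw [add_neg_cancel, zero_add, nsmul_eq_mul]
    rw [mul_one, mul_assoc]

lemma exists_C :
    ∃ C : AddMonoid.End M, (p • 1 : AddMonoid.End M) = normEnd p t + (1 - t) * C ∧
      Commute C t := by
  refine ⟨∑ j ∈ Finset.range p, ∑ i ∈ Finset.range j, t ^ i, ?_, ?_⟩
  · have key : (1 - t) * ∑ j ∈ Finset.range p, ∑ i ∈ Finset.range j, t ^ i
        = p • (1 : AddMonoid.End M) - normEnd p t := by
      rw [Finset.mul_sum]
      have h1 : ∀ j, (1 - t) * ∑ i ∈ Finset.range j, t ^ i = 1 - t ^ j := by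
        intro j
        have h := mul_geom_sum t j
        have h2 : (1 - t) * ∑ i ∈ Finset.range j, t ^ i
            = -((t - 1) * ∑ i ∈ Finset.range j, t ^ i) := by
          rw [← neg_mul, neg_sub]
        rw [h2, h, neg_sub]
      rw [Finset.sum_congr rfl fun j _ => h1 j, Finset.sum_sub_distrib, Finset.sum_const,
        Finset.card_range, normEnd]
    rw [key]
    abel
  · refine Commute.sum_left _ _ _ fun j _ => Commute.sum_left _ _ _ fun i _ => ?_
    exact (Commute.refl t).pow_left i

lemma inv_of_bij (hbij : Function.Bijective fun x : M => p • x) :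
    ∃ q : AddMonoid.End M, (∀ x, q (p • x) = x) ∧ (∀ x, p • q x = x) ∧
      ∀ f : AddMonoid.End M, ∀ x, q (f x) = f (q x) := by
  have hbij' : Function.Bijective ⇑(p • (1 : AddMonoid.End M)) := hbij
  let E := AddEquiv.ofBijective (p • (1 : AddMonoid.End M)) hbij'
  have hE : ∀ x, E x = p • x := fun x => rfl
  refine ⟨E.symm.toAddMonoidHom, fun x => ?_, fun x => ?_, fun f x => ?_⟩
  · show E.symm (p • x) = x
    rw [← hE]; exact E.symm_apply_apply x
  · show p • E.symm x = x
    rw [← hE]; exact E.apply_symm_apply x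
  · show E.symm (f x) = f (E.symm x)
    apply hbij.injective
    show p • E.symm (f x) = p • f (E.symm x)
    rw [← hE, E.apply_symm_apply, ← map_nsmul, ← hE, E.apply_symm_apply]

lemma norm_apply_sub (ht : t ^ p = 1) (x : M) : normEnd p t ((1 - t) x) = 0 := by
  have : normEnd p t ((1 - t) x) = (normEnd p t * (1 - t)) x := rfl
  rw [this, norm_mul_sub ht]; rfl

lemma sub_apply_norm (ht : t ^ p = 1) (x : M) : (1 - t) (normEnd p t x) = 0 := by
  have : (1 - t) (normEnd p t x) = ((1 - t) * normEnd p t) x := rfl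
  rw [this, sub_mul_norm ht]; rfl

lemma one_to_two (ht : t ^ p = 1) (hbij : Function.Bijective fun x : M => p • x) :
    AddMonoidHom.ker ((1 : AddMonoid.End M) - t) = AddMonoidHom.range (normEnd p t) ∧
    AddMonoidHom.range ((1 : AddMonoid.End M) - t) = AddMonoidHom.ker (normEnd p t) ∧
    IsCompl (AddMonoidHom.ker (normEnd p t))
      (AddMonoidHom.ker ((1 : AddMonoid.End M) - t)) := by
  obtain ⟨q, hq1, hq2, hqc⟩ := inv_of_bij hbij
  obtain ⟨C, hC, hCt⟩ := exists_C (p := p) (t := t)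
  have hCn : (1 - t) * C = p • (1 : AddMonoid.End M) - normEnd p t := by
    rw [hC]; abel
  refine ⟨?_, ?_, ?_, ?_⟩
  · ext x
    simp only [mem_ker_end, mem_range_end]
    constructor
    · intro hx
      refine ⟨q x, ?_⟩
      rw [← hqc (normEnd p t) x, norm_apply_fixed hx, hq1]
    · rintro ⟨y, rfl⟩
      exact sub_apply_norm ht y
  · ext x
    simp only [mem_ker_end, mem_range_end]
    constructor
    · rintro ⟨y, rfl⟩
      exact norm_apply_sub ht y
    · intro hx
      refine ⟨q (C x), ?_⟩
      have h1 : (1 - t) (C x) = p • x := by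
        have h2 : (1 - t) (C x) = ((1 - t) * C) x := rfl
        rw [h2, hCn]
        show p • ((1 : AddMonoid.End M) x) - normEnd p t x = p • x
        rw [hx, sub_zero]; rfl
      rw [← hqc (1 - t) (C x), h1, hq1]
  · rw [AddSubgroup.disjoint_def]
    intro x h1 h2
    rw [mem_ker_end] at h1 h2
    have : p • x = 0 := by rw [← norm_apply_fixed h2, h1]
    calc x = q (p • x) := (hq1 x).symm
      _ = 0 := by rw [this, map_zero]
  · rw [codisjoint_iff, eq_top_iff]
    intro x _
    rw [AddSubgroup.mem_sup]
    refine ⟨x - q (normEnd p t x), ?_, q (normEnd p t x), ?_, by abel⟩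
    · rw [mem_ker_end, map_sub]
      have h1 : normEnd p t (q (normEnd p t x)) = normEnd p t x := by
        rw [← hqc (normEnd p t)]
        have h2 : normEnd p t (normEnd p t x) = (normEnd p t * normEnd p t) x := rfl
        rw [h2, norm_mul_norm ht]
        show q (p • normEnd p t x) = normEnd p t x
        exact hq1 _
      rw [h1, sub_self]
    · rw [mem_ker_end, ← hqc (1 - t), sub_apply_norm ht, map_zero]

lemma two_to_three (ht : t ^ p = 1)
    (ha : AddMonoidHom.ker ((1 : AddMonoid.End M) - t) = AddMonoidHom.range (normEnd p t))
    (hb : AddMonoidHom.range ((1 : AddMonoid.End M) - t) = AddMonoidHom.ker (normEnd p t))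
    (hc : IsCompl (AddMonoidHom.ker (normEnd p t))
      (AddMonoidHom.ker ((1 : AddMonoid.End M) - t))) :
    Set.BijOn ⇑((1 : AddMonoid.End M) - t)
        (AddMonoidHom.ker (normEnd p t) : Set M) (AddMonoidHom.ker (normEnd p t) : Set M) ∧
    Set.BijOn ⇑(normEnd p t)
        (AddMonoidHom.ker ((1 : AddMonoid.End M) - t) : Set M)
        (AddMonoidHom.ker ((1 : AddMonoid.End M) - t) : Set M) := by
  have hd : ∀ x : M, normEnd p t x = 0 → (1 - t) x = 0 → x = 0 := by
    intro x h1 h2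
    exact (AddSubgroup.disjoint_def.mp hc.disjoint) (AddMonoidHom.mem_ker.mpr h1)
      (AddMonoidHom.mem_ker.mpr h2)
  have hdec : ∀ c : M, ∃ a b : M, normEnd p t a = 0 ∧ (1 - t) b = 0 ∧ a + b = c := by
    intro c
    have hmem : c ∈ AddMonoidHom.ker (normEnd p t) ⊔
        AddMonoidHom.ker ((1 : AddMonoid.End M) - t) := by
      rw [codisjoint_iff.mp hc.codisjoint]; trivial
    obtain ⟨a, haa, b, hbb, hab⟩ := AddSubgroup.mem_sup.mp hmem
    exact ⟨a, b, AddMonoidHom.mem_ker.mp haa, AddMonoidHom.mem_ker.mp hbb, hab⟩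
  constructor
  · refine ⟨?_, ?_, ?_⟩
    · intro x hx
      simp only [SetLike.mem_coe, mem_ker_end] at hx ⊢
      exact norm_apply_sub ht x
    · intro x hx y hy hxy
      simp only [SetLike.mem_coe, mem_ker_end] at hx hy
      have h1 : (1 - t) (x - y) = 0 := by rw [map_sub, hxy, sub_self]
      have h2 : normEnd p t (x - y) = 0 := by rw [map_sub, hx, hy, sub_self]
      exact sub_eq_zero.mp (hd _ h2 h1)
    · intro y hy
      simp only [SetLike.mem_coe, mem_ker_end] at hy
      have : y ∈ AddMonoidHom.range ((1 : AddMonoid.End M) - t) := by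
        rw [hb]; exact AddMonoidHom.mem_ker.mpr hy
      obtain ⟨c, hcy⟩ := this
      obtain ⟨a, b, ha1, hb1, hab⟩ := hdec c
      refine ⟨a, ?_, ?_⟩
      · simp only [SetLike.mem_coe, mem_ker_end]; exact ha1
      · have : (1 - t) a = (1 - t) c := by
          rw [← hab, map_add, hb1, add_zero]
        rw [this]; exact hcy
  · refine ⟨?_, ?_, ?_⟩
    · intro x hx
      simp only [SetLike.mem_coe, mem_ker_end] at hx ⊢
      exact sub_apply_norm ht x
    · intro x hx y hy hxy
      simp only [SetLike.mem_coe, mem_ker_end] at hx hy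
      have h1 : normEnd p t (x - y) = 0 := by rw [map_sub, hxy, sub_self]
      have h2 : (1 - t) (x - y) = 0 := by rw [map_sub, hx, hy, sub_self]
      exact sub_eq_zero.mp (hd _ h1 h2)
    · intro y hy
      simp only [SetLike.mem_coe, mem_ker_end] at hy
      have : y ∈ AddMonoidHom.range (normEnd p t) := by
        rw [← ha]; exact AddMonoidHom.mem_ker.mpr hy
      obtain ⟨d, hdy⟩ := this
      obtain ⟨a, b, ha1, hb1, hab⟩ := hdec d
      refine ⟨b, ?_, ?_⟩
      · simp only [SetLike.mem_coe, mem_ker_end]; exact hb1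
      · have : normEnd p t b = normEnd p t d := by
          rw [← hab, map_add, ha1, zero_add]
        rw [this]; exact hdy

lemma three_to_one (hp : p.Prime) (ht : t ^ p = 1)
    (B1 : Set.BijOn ⇑((1 : AddMonoid.End M) - t)
        (AddMonoidHom.ker (normEnd p t) : Set M) (AddMonoidHom.ker (normEnd p t) : Set M))
    (B2 : Set.BijOn ⇑(normEnd p t)
        (AddMonoidHom.ker ((1 : AddMonoid.End M) - t) : Set M)
        (AddMonoidHom.ker ((1 : AddMonoid.End M) - t) : Set M)) :
    Function.Bijective fun x : M => p • x := by
  obtain ⟨g, hg, hgt⟩ := exists_g hp ht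
  have hgn : ∀ x : M, normEnd p t x = 0 → normEnd p t (g x) = 0 := by
    intro x hx
    have hc : Commute g (normEnd p t) :=
      Commute.sum_right _ _ _ fun j _ => hgt.pow_right j
    have h1 : normEnd p t (g x) = (normEnd p t * g) x := rfl
    rw [h1, ← hc]
    show g (normEnd p t x) = 0
    rw [hx, map_zero]
  have hmem0 : (0 : M) ∈ (AddMonoidHom.ker (normEnd p t) : Set M) := by
    simp only [SetLike.mem_coe, mem_ker_end, map_zero]
  have hmem0' : (0 : M) ∈ (AddMonoidHom.ker ((1 : AddMonoid.End M) - t) : Set M) := by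
    simp only [SetLike.mem_coe, mem_ker_end, map_zero]
  have Bk : ∀ k : ℕ, Set.BijOn ⇑(((1 : AddMonoid.End M) - t) ^ k)
      (AddMonoidHom.ker (normEnd p t) : Set M) (AddMonoidHom.ker (normEnd p t) : Set M) := by
    intro k
    induction k with
    | zero =>
      have : ⇑(((1 : AddMonoid.End M) - t) ^ 0) = id := rfl
      rw [this]; exact Set.bijOn_id _
    | succ k ih =>
      have : ⇑(((1 : AddMonoid.End M) - t) ^ (k + 1))
          = ⇑(((1 : AddMonoid.End M) - t) ^ k) ∘ ⇑((1 : AddMonoid.End M) - t) := by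
        rw [pow_succ]; rfl
      rw [this]
      exact ih.comp B1
  have hgp : ∀ x : M, (((1 : AddMonoid.End M) - t) ^ p) x = p • g x := by
    intro x
    rw [hg]; rfl
  constructor
  · have h0 : ∀ x : M, p • x = 0 → x = 0 := by
      intro x hx
      have h1 : normEnd p t x ∈ (AddMonoidHom.ker ((1 : AddMonoid.End M) - t) : Set M) := by
        simp only [SetLike.mem_coe, mem_ker_end]
        exact sub_apply_norm ht x
      have h2 : normEnd p t (normEnd p t x) = 0 := by
        have := norm_apply_fixed (p := p)
          (show (1 - t) (normEnd p t x) = 0 from sub_apply_norm ht x)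
        rw [this, ← map_nsmul, hx, map_zero]
      have h3 : normEnd p t x = 0 := by
        refine B2.injOn h1 hmem0' ?_
        rw [h2, map_zero]
      have h4 : (((1 : AddMonoid.End M) - t) ^ p) x = 0 := by
        rw [hgp, ← map_nsmul, hx, map_zero]
      refine (Bk p).injOn ?_ hmem0 ?_
      · simp only [SetLike.mem_coe, mem_ker_end]; exact h3
      · rw [h4, map_zero]
    intro x y hxy
    have : p • (x - y) = 0 := by
      simp only at hxy
      rw [smul_sub, hxy, sub_self]
    exact sub_eq_zero.mp (h0 _ this)
  · intro y
    have h1 : normEnd p t y ∈ (AddMonoidHom.ker ((1 : AddMonoid.End M) - t) : Set M) := by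
      simp only [SetLike.mem_coe, mem_ker_end]
      exact sub_apply_norm ht y
    obtain ⟨u, hu, hu'⟩ := B2.surjOn h1
    simp only [SetLike.mem_coe, mem_ker_end] at hu
    have hpu : p • u = normEnd p t y := by rw [← norm_apply_fixed hu, hu']
    obtain ⟨w, hw, hw'⟩ := B2.surjOn (show u ∈ (AddMonoidHom.ker
        ((1 : AddMonoid.End M) - t) : Set M) from by
      simp only [SetLike.mem_coe, mem_ker_end]; exact hu)
    simp only [SetLike.mem_coe, mem_ker_end] at hw
    have hpw : p • w = u := by rw [← norm_apply_fixed hw, hw']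
    have hyu : y - u ∈ (AddMonoidHom.ker (normEnd p t) : Set M) := by
      simp only [SetLike.mem_coe, mem_ker_end]
      rw [map_sub, ← hu', norm_apply_fixed hu, hpu, sub_self]
    obtain ⟨z, hz, hz'⟩ := (Bk p).surjOn hyu
    refine ⟨g z + w, ?_⟩
    show p • (g z + w) = y
    rw [smul_add, hpw, ← hgp, hz']
    abel

end Stmt6Aux

/-- For a prime `p` and a module `M` over `S = ℤ[t]/(t^p − 1)` the following are
equivalent: (1) multiplication by `p` is invertible on `M`; (2) `ker(1 − t) = im N(t)`,
`im(1 − t) = ker N(t)` and `M = ker N(t) ⊕ ker(1 − t)` (as an internal direct sum, i.e. the two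
kernels are complementary subgroups); (3) `1 − t` restricts to an invertible map on `ker N(t)`
and `N(t)` restricts to an invertible map on `ker(1 − t)`. -/
theorem stmt6 (p : ℕ) (hp : p.Prime) {M : Type*} [AddCommGroup M] (t : AddMonoid.End M)
    (ht : t ^ p = 1) :
    ((Function.Bijective fun x : M => p • x) ↔
      (AddMonoidHom.ker ((1 : AddMonoid.End M) - t) = AddMonoidHom.range (normEnd p t) ∧
       AddMonoidHom.range ((1 : AddMonoid.End M) - t) = AddMonoidHom.ker (normEnd p t) ∧
       IsCompl (AddMonoidHom.ker (normEnd p t))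
         (AddMonoidHom.ker ((1 : AddMonoid.End M) - t)))) ∧
    ((Function.Bijective fun x : M => p • x) ↔
      (Set.BijOn ⇑((1 : AddMonoid.End M) - t)
          (AddMonoidHom.ker (normEnd p t) : Set M) (AddMonoidHom.ker (normEnd p t) : Set M) ∧
       Set.BijOn ⇑(normEnd p t)
          (AddMonoidHom.ker ((1 : AddMonoid.End M) - t) : Set M)
          (AddMonoidHom.ker ((1 : AddMonoid.End M) - t) : Set M))) := by
  constructor
  · constructor
    · exact fun h => Stmt6Aux.one_to_two ht h
    · rintro ⟨ha, hb, hc⟩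
      obtain ⟨B1, B2⟩ := Stmt6Aux.two_to_three ht ha hb hc
      exact Stmt6Aux.three_to_one hp ht B1 B2
  · constructor
    · intro h
      obtain ⟨ha, hb, hc⟩ := Stmt6Aux.one_to_two ht h
      exact Stmt6Aux.two_to_three ht ha hb hc
    · rintro ⟨B1, B2⟩
      exact Stmt6Aux.three_to_one hp ht B1 B2
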